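/- Let A : X → Y be a linear map between finite-dimensional real inner product spaces with Moore–Penrose pseudoinverse A† : Y → X. If z ∈ Y satisfies ‖(A∘A* + σ id)[z] + v‖ ≤ η‖v‖ with σ, η ≥ 0, then ‖A*[z]‖ ≤ (1+η)·‖A†‖_op·‖v‖. -/

import Mathlib

open ContinuousLinearMap

set_option maxHeartbeats 1000000

/-- `B` is the Moore–Penrose pseudoinverse of `A` (the four Penrose conditions, with
self-adjointness expressing that `A ∘ B` and `B ∘ A` are orthogonal projections). -/
def IsPseudoinverse {X Y : Type*}
    [NormedAddCommGroup X] [InnerProductSpace ℝ X] [FiniteDimensional ℝ X]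
    [NormedAddCommGroup Y] [InnerProductSpace ℝ Y] [FiniteDimensional ℝ Y]
    (A : X →L[ℝ] Y) (B : Y →L[ℝ] X) : Prop :=
  A ∘L B ∘L A = A ∧ B ∘L A ∘L B = B ∧
    IsSelfAdjoint (A ∘L B) ∧ IsSelfAdjoint (B ∘L A)

theorem stmt_13 {X Y : Type*}
    [NormedAddCommGroup X] [InnerProductSpace ℝ X] [FiniteDimensional ℝ X]
    [NormedAddCommGroup Y] [InnerProductSpace ℝ Y] [FiniteDimensional ℝ Y]
    (A : X →L[ℝ] Y) (B : Y →L[ℝ] X) (hB : IsPseudoinverse A B)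
    (σ η : ℝ) (hσ : 0 ≤ σ) (hη : 0 ≤ η) (v z : Y)
    (h : ‖A (ContinuousLinearMap.adjoint A z) + σ • z + v‖ ≤ η * ‖v‖) :
    ‖ContinuousLinearMap.adjoint A z‖ ≤ (1 + η) * ‖B‖ * ‖v‖ := by
  obtain ⟨h1, h2, h3, h4⟩ := hB
  rw [isSelfAdjoint_iff'] at h3 h4
  set x := ContinuousLinearMap.adjoint A z with hx
  set w := A x + σ • z + v with hw
  -- key identity : B ∘L (A ∘L A†) = A†
  have hc : B ∘L (A ∘L ContinuousLinearMap.adjoint A) = ContinuousLinearMap.adjoint A := by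
    have h5 : ContinuousLinearMap.adjoint (B ∘L (A ∘L ContinuousLinearMap.adjoint A))
        = ContinuousLinearMap.adjoint (ContinuousLinearMap.adjoint A) := by
      rw [adjoint_comp, adjoint_comp, adjoint_adjoint]
      rw [comp_assoc]
      rw [show ContinuousLinearMap.adjoint A ∘L ContinuousLinearMap.adjoint B
            = ContinuousLinearMap.adjoint (B ∘L A) by rw [adjoint_comp]]
      rw [h4]
      exact h1
    have h6 := congrArg ContinuousLinearMap.adjoint h5
    rwa [adjoint_adjoint, adjoint_adjoint] at h6
  have hBA : B (A x) = x := by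
    have := congrFun (congrArg DFunLike.coe hc) z
    simpa using this
  -- P := A ∘L B is an orthogonal projection
  have hidem : (A ∘L B) ∘L (A ∘L B) = A ∘L B := by
    rw [← comp_assoc, comp_assoc A B A, h1]
  have hPz : (A ∘L B) z = ContinuousLinearMap.adjoint B x := by
    have : (A ∘L B) z = ContinuousLinearMap.adjoint (A ∘L B) z := by rw [h3]
    rw [this, adjoint_comp]
    rfl
  have hPnorm : ‖(A ∘L B) z‖ ≤ ‖B‖ * ‖x‖ := by
    rw [hPz]
    calc ‖ContinuousLinearMap.adjoint B x‖ ≤ ‖ContinuousLinearMap.adjoint B‖ * ‖x‖ :=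
          le_opNorm _ _
      _ = ‖B‖ * ‖x‖ := by
          rw [(ContinuousLinearMap.adjoint : (Y →L[ℝ] X) ≃ₗᵢ[ℝ] (X →L[ℝ] Y)).norm_map B]
  -- ⟨Pz, z⟩ ≥ 0
  have hPos : (0 : ℝ) ≤ inner ℝ ((A ∘L B) z) z := by
    have : inner ℝ ((A ∘L B) z) z = (inner ℝ ((A ∘L B) z) ((A ∘L B) z) : ℝ) := by
      conv_lhs => rw [show (A ∘L B) z = ((A ∘L B) ∘L (A ∘L B)) z by rw [hidem]]
      have : ((A ∘L B) ∘L (A ∘L B)) z = (A ∘L B) ((A ∘L B) z) := rfl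
      rw [this, ← adjoint_inner_right, h3]
    rw [this]
    exact real_inner_self_nonneg
  -- main computation
  have e1 : ‖x‖ ^ 2 = inner ℝ ((A ∘L B) z) (A x) := by
    have : (inner ℝ x x : ℝ) = inner ℝ x (B (A x)) := by rw [hBA]
    rw [hPz, adjoint_inner_left, ← this, real_inner_self_eq_norm_sq]
  have e2 : (inner ℝ ((A ∘L B) z) (A x) : ℝ)
      = inner ℝ ((A ∘L B) z) w - inner ℝ ((A ∘L B) z) v - σ * inner ℝ ((A ∘L B) z) z := by
    have : A x = w - v - σ • z := by rw [hw]; abel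
    rw [this, inner_sub_right, inner_sub_right, real_inner_smul_right]
  have b1 : (inner ℝ ((A ∘L B) z) w : ℝ) ≤ ‖(A ∘L B) z‖ * ‖w‖ := real_inner_le_norm _ _
  have b2 : -(inner ℝ ((A ∘L B) z) v : ℝ) ≤ ‖(A ∘L B) z‖ * ‖v‖ := by
    calc -(inner ℝ ((A ∘L B) z) v : ℝ) = inner ℝ ((A ∘L B) z) (-v) := by
          rw [inner_neg_right]
      _ ≤ ‖(A ∘L B) z‖ * ‖-v‖ := real_inner_le_norm _ _
      _ = ‖(A ∘L B) z‖ * ‖v‖ := by rw [norm_neg]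
  have hwn : ‖w‖ ≤ η * ‖v‖ := h
  have hPzn : (0 : ℝ) ≤ ‖(A ∘L B) z‖ := norm_nonneg _
  have hxn : (0 : ℝ) ≤ ‖x‖ := norm_nonneg _
  have hvn : (0 : ℝ) ≤ ‖v‖ := norm_nonneg _
  have e3 : ‖x‖ ^ 2 ≤ (1 + η) * ‖B‖ * ‖v‖ * ‖x‖ := by
    calc ‖x‖ ^ 2 = (inner ℝ ((A ∘L B) z) w : ℝ) - (inner ℝ ((A ∘L B) z) v : ℝ)
              - σ * (inner ℝ ((A ∘L B) z) z : ℝ) := by rw [e1, e2]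
      _ ≤ (inner ℝ ((A ∘L B) z) w : ℝ) - (inner ℝ ((A ∘L B) z) v : ℝ) :=
          sub_le_self _ (mul_nonneg hσ hPos)
      _ ≤ ‖(A ∘L B) z‖ * ‖w‖ + ‖(A ∘L B) z‖ * ‖v‖ := by linarith
      _ ≤ ‖(A ∘L B) z‖ * (η * ‖v‖) + ‖(A ∘L B) z‖ * ‖v‖ :=
          add_le_add_left (mul_le_mul_of_nonneg_left hwn hPzn) _
      _ = ‖(A ∘L B) z‖ * ((1 + η) * ‖v‖) := by ring
      _ ≤ ‖B‖ * ‖x‖ * ((1 + η) * ‖v‖) := by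
          have : (0:ℝ) ≤ (1 + η) * ‖v‖ := by positivity
          exact mul_le_mul_of_nonneg_right hPnorm this
      _ = (1 + η) * ‖B‖ * ‖v‖ * ‖x‖ := by ring
  have hcn : (0 : ℝ) ≤ (1 + η) * ‖B‖ * ‖v‖ := by positivity
  rcases eq_or_lt_of_le hxn with h0 | h0
  · rw [← h0]; exact hcn
  · have := e3
    rw [pow_two] at this
    exact le_of_mul_le_mul_right (by linarith) h0
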